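/- With the dynamic program of the previous statement, min over b' ≤ b and i ≤ m of h_part(i,m,b') equals the minimum over all partitions of {1,...,m} into at most b consecutive intervals of the sum of φ over the intervals. -/

import Mathlib

open scoped ENNReal

/-- `blocksFrom s l j` : `l` is a list of consecutive nonempty intervals
`[(i₁,j₁),...,(i_b,j_b)]` with `i₁ = s`, `i_{k+1} = j_k + 1` and `j_b = j`,
i.e. a block partition of the columns `{s,...,j}`. -/
def blocksFrom : ℕ → List (ℕ × ℕ) → ℕ → Prop
  | _, [], _ => False
  | s, [(i, e)], j => i = s ∧ s ≤ e ∧ e = j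
  | s, (i, e) :: q :: rest, j => i = s ∧ s ≤ e ∧ blocksFrom (e + 1) (q :: rest) j

/-- The dynamic program `h_part` for minimizing the total `φ`-value of a block
partition: `hpart φ i j b'` is intended to be the best total value of a partition
of `[1,j]` into `b'` blocks whose last block is `[i,j]`. -/
noncomputable def hpart (φ : ℕ → ℕ → ℝ≥0∞) : ℕ → ℕ → ℕ → ℝ≥0∞
  | _, _, 0 => ⊤
  | i, j, 1 => if i = 1 then φ 1 j else ⊤
  | i, j, b + 2 => if i = 1 then ⊤
      else ((Finset.Icc 1 (i - 1)).inf fun i' => hpart φ i' (i - 1) (b + 1)) + φ i j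

lemma blocksFrom_le : ∀ (l : List (ℕ × ℕ)) (s j : ℕ), blocksFrom s l j → s ≤ j := by
  intro l
  induction l with
  | nil => intro s j h; exact absurd h (by simp [blocksFrom])
  | cons a t ih =>
    obtain ⟨i, e⟩ := a
    intro s j h
    cases t with
    | nil => obtain ⟨h1, h2, h3⟩ := h; omega
    | cons q rest =>
      obtain ⟨h1, h2, h3⟩ := h
      have := ih (e + 1) j h3
      omega

lemma blocksFrom_mem : ∀ (l : List (ℕ × ℕ)) (s j : ℕ), blocksFrom s l j →
    ∀ p ∈ l, s ≤ p.1 ∧ p.1 ≤ p.2 ∧ p.2 ≤ j := by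
  intro l
  induction l with
  | nil => intro s j h; exact absurd h (by simp [blocksFrom])
  | cons a t ih =>
    obtain ⟨i, e⟩ := a
    intro s j h p hp
    cases t with
    | nil =>
      obtain ⟨h1, h2, h3⟩ := h
      simp at hp
      subst hp; simp; omega
    | cons q rest =>
      obtain ⟨h1, h2, h3⟩ := h
      have hej := blocksFrom_le _ _ _ h3
      rcases List.mem_cons.mp hp with rfl | hp'
      · simp; omega
      · have := ih (e + 1) j h3 p hp'
        omega

lemma blocksFrom_snoc : ∀ (l : List (ℕ × ℕ)), l ≠ [] → ∀ (s i e j : ℕ),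
    (blocksFrom s (l ++ [(i, e)]) j ↔ (blocksFrom s l (i - 1) ∧ 1 ≤ i ∧ i ≤ e ∧ e = j)) := by
  intro l
  induction l with
  | nil => intro h; exact absurd rfl h
  | cons a t ih =>
    obtain ⟨a1, a2⟩ := a
    intro _ s i e j
    cases t with
    | nil =>
      show (a1 = s ∧ s ≤ a2 ∧ blocksFrom (a2+1) [(i,e)] j) ↔ _
      show _ ↔ ((a1 = s ∧ s ≤ a2 ∧ a2 = i - 1) ∧ 1 ≤ i ∧ i ≤ e ∧ e = j)
      constructor
      · rintro ⟨h1, h2, h3, h4, h5⟩; exact ⟨⟨h1, h2, by omega⟩, by omega, by omega, h5⟩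
      · rintro ⟨⟨h1, h2, h3⟩, h4, h5, h6⟩; exact ⟨h1, h2, by omega, by omega, h6⟩
    | cons q rest =>
      show (a1 = s ∧ s ≤ a2 ∧ blocksFrom (a2+1) ((q :: rest) ++ [(i,e)]) j) ↔ _
      rw [ih (by simp) (a2+1) i e j]
      show _ ↔ ((a1 = s ∧ s ≤ a2 ∧ blocksFrom (a2+1) (q :: rest) (i - 1)) ∧ 1 ≤ i ∧ i ≤ e ∧ e = j)
      tauto

lemma blocksFrom_last_eq : ∀ (l : List (ℕ × ℕ)) (s i e j : ℕ),
    blocksFrom s (l ++ [(i, e)]) j → e = j := by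
  intro l s i e j h
  cases l with
  | nil => exact h.2.2
  | cons a t => exact ((blocksFrom_snoc (a :: t) (by simp) s i e j).mp h).2.2.2

lemma hpart_le (φ : ℕ → ℕ → ℝ≥0∞) : ∀ (l : List (ℕ × ℕ)) (i j : ℕ),
    blocksFrom 1 (l ++ [(i, j)]) j →
    hpart φ i j (l.length + 1) ≤ ((l ++ [(i, j)]).map fun p => φ p.1 p.2).sum := by
  intro l
  induction l using List.reverseRecOn with
  | nil =>
    intro i j h
    obtain ⟨h1, h2, h3⟩ := h
    subst h1
    simp [hpart]
  | append_singleton l' a ih =>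
    obtain ⟨i', e'⟩ := a
    intro i j h
    have hsnoc := (blocksFrom_snoc (l' ++ [(i', e')]) (by simp) 1 i j j).mp h
    obtain ⟨hfront, hi1, hij, -⟩ := hsnoc
    have he' : e' = i - 1 := blocksFrom_last_eq l' 1 i' e' (i - 1) hfront
    subst he'
    have hi1' : (1 : ℕ) ≤ i - 1 := blocksFrom_le _ _ _ hfront
    have hmem := blocksFrom_mem _ _ _ hfront (i', i - 1) (by simp)
    have hi2 : i ≠ 1 := by omega
    have hIH := ih i' (i - 1) hfront
    have hinf : ((Finset.Icc 1 (i - 1)).inf fun i'' => hpart φ i'' (i - 1) (l'.length + 1)) ≤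
        hpart φ i' (i - 1) (l'.length + 1) :=
      Finset.inf_le (by simp [Finset.mem_Icc]; omega)
    have hlen : (l' ++ [(i', i - 1)]).length + 1 = l'.length + 2 := by simp
    rw [hlen]
    show (if i = 1 then ⊤ else _) ≤ _
    rw [if_neg hi2]
    calc ((Finset.Icc 1 (i - 1)).inf fun i'' => hpart φ i'' (i - 1) (l'.length + 1)) + φ i j
        ≤ ((l' ++ [(i', i - 1)]).map fun p => φ p.1 p.2).sum + φ i j :=
          add_le_add (le_trans hinf hIH) le_rfl
      _ = ((l' ++ [(i', i - 1)] ++ [(i, j)]).map fun p => φ p.1 p.2).sum := by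
          simp [add_assoc]

lemma exists_blocks (φ : ℕ → ℕ → ℝ≥0∞) : ∀ (n i j : ℕ), 1 ≤ i → i ≤ j →
    hpart φ i j (n + 1) ≠ ⊤ →
    ∃ l : List (ℕ × ℕ), blocksFrom 1 (l ++ [(i, j)]) j ∧ l.length + 1 = n + 1 ∧
      ((l ++ [(i, j)]).map fun p => φ p.1 p.2).sum ≤ hpart φ i j (n + 1) := by
  intro n
  induction n with
  | zero =>
    intro i j hi hij hne
    have hi1 : i = 1 := by
      by_contra h
      exact hne (by simp [hpart, h])
    subst hi1
    exact ⟨[], ⟨rfl, hij, rfl⟩, rfl, by simp [hpart]⟩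
  | succ n ih =>
    intro i j hi hij hne
    have hi1 : i ≠ 1 := by
      rintro rfl
      exact hne (by simp [hpart])
    have heq : hpart φ i j (n + 2) =
        ((Finset.Icc 1 (i - 1)).inf fun i' => hpart φ i' (i - 1) (n + 1)) + φ i j := by
      show (if i = 1 then ⊤ else _) = _
      rw [if_neg hi1]
    rw [heq] at hne ⊢
    have hinf_ne : ((Finset.Icc 1 (i - 1)).inf fun i' => hpart φ i' (i - 1) (n + 1)) ≠ ⊤ := by
      intro h; exact hne (by simp [h])
    have hne2 : (Finset.Icc 1 (i - 1)).Nonempty := by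
      rw [Finset.nonempty_Icc]; omega
    obtain ⟨i', hi'mem, hi'eq⟩ := Finset.exists_mem_eq_inf (Finset.Icc 1 (i - 1))
      hne2 (fun i' => hpart φ i' (i - 1) (n + 1))
    rw [Finset.mem_Icc] at hi'mem
    rw [hi'eq] at hinf_ne ⊢
    obtain ⟨l, hbl, hlen, hsum⟩ := ih i' (i - 1) hi'mem.1 hi'mem.2 hinf_ne
    refine ⟨l ++ [(i', i - 1)], ?_, by simp; omega, ?_⟩
    · exact (blocksFrom_snoc (l ++ [(i', i - 1)]) (by simp) 1 i j j).mpr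
        ⟨hbl, by omega, hij, rfl⟩
    · calc ((l ++ [(i', i - 1)] ++ [(i, j)]).map fun p => φ p.1 p.2).sum
          = ((l ++ [(i', i - 1)]).map fun p => φ p.1 p.2).sum + φ i j := by simp [add_assoc]
        _ ≤ hpart φ i' (i - 1) (n + 1) + φ i j := add_le_add hsum le_rfl

/-- Minimizing over the number of blocks `b' ≤ b` and the start `i ≤ m` of the last
block, the dynamic program computes the minimum total `φ`-value over all partitions
of `{1,...,m}` into at most `b` consecutive intervals. -/
theorem hpart_min_correct (φ : ℕ → ℕ → ℝ≥0∞) (m b : ℕ) (hm : 1 ≤ m) (hb : 1 ≤ b) :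
    ((Finset.Icc 1 b).inf fun b' => (Finset.Icc 1 m).inf fun i => hpart φ i m b') =
      sInf {x : ℝ≥0∞ | ∃ l : List (ℕ × ℕ), blocksFrom 1 l m ∧ l.length ≤ b ∧
        x = (l.map fun p => φ p.1 p.2).sum} := by
  apply le_antisymm
  · apply le_sInf
    rintro x ⟨l, hbl, hlen, rfl⟩
    rcases l.eq_nil_or_concat with rfl | ⟨l', ⟨i, e⟩, rfl⟩
    · exact absurd hbl (by simp [blocksFrom])
    rw [List.concat_eq_append] at hbl hlen
    have he : e = m := blocksFrom_last_eq l' 1 i e m hbl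
    subst e
    have hmem := blocksFrom_mem _ _ _ hbl (i, m) (by simp)
    have h1 := hpart_le φ l' i m hbl
    have hb' : l'.length + 1 ∈ Finset.Icc 1 b := by
      simp at hlen ⊢; omega
    have hi : i ∈ Finset.Icc 1 m := by
      simp [Finset.mem_Icc]; omega
    calc ((Finset.Icc 1 b).inf fun b' => (Finset.Icc 1 m).inf fun i => hpart φ i m b')
        ≤ (Finset.Icc 1 m).inf fun i => hpart φ i m (l'.length + 1) := Finset.inf_le hb'
      _ ≤ hpart φ i m (l'.length + 1) := Finset.inf_le hi
      _ ≤ _ := by rw [List.concat_eq_append]; exact h1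
  · apply Finset.le_inf
    intro b' hb'
    apply Finset.le_inf
    intro i hi
    rw [Finset.mem_Icc] at hb' hi
    by_cases htop : hpart φ i m b' = ⊤
    · rw [htop]; exact le_top
    obtain ⟨n, rfl⟩ : ∃ n, b' = n + 1 := ⟨b' - 1, by omega⟩
    obtain ⟨l, hbl, hlen, hsum⟩ := exists_blocks φ n i m hi.1 hi.2 htop
    refine le_trans (sInf_le ?_) hsum
    exact ⟨l ++ [(i, m)], hbl, by simp; omega, rfl⟩
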